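/- (Main theorem of affine geometry) Let S be an affine space over a real vector space V with 2 ≤ dim V < ∞, and let F : S → S be a bijective collineation, i.e. whenever three points p, q, r of S lie on a common affine line, the points F(p), F(q), F(r) also lie on a common affine line. Then F is an affine map: there exists a linear map f : V → V such that F(p + v) = F(p) + f(v) for all p ∈ S and v ∈ V. -/

import Mathlib

open Module

section
variable {V : Type*} [AddCommGroup V] [Module ℝ V]
  (G : V → V) (hinj : Function.Injective G)
  (hcol : ∀ p q r : V, Collinear ℝ ({p, q, r} : Set V) →
      Collinear ℝ ({G p, G q, G r} : Set V))

include hinj hcol in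
/-- image of a point of a line is on the image line -/
theorem bca_colG {a b x : V} (hab : a ≠ b) (hx : x ∈ affineSpan ℝ ({a, b} : Set V)) :
    G x ∈ affineSpan ℝ ({G a, G b} : Set V) := by
  have h1 : Collinear ℝ ({x, a, b} : Set V) := collinear_insert_of_mem_affineSpan_pair hx
  have h2 : Collinear ℝ ({a, b, x} : Set V) := by
    apply h1.subset; intro y hy; simp at hy ⊢; tauto
  have h3 := hcol a b x h2
  exact h3.mem_affineSpan_of_mem_of_ne (by simp) (by simp) (by simp)
    (fun h => hab (hinj h))

include hinj hcol in
theorem bca_L0 {M : AffineSubspace ℝ V} {a b : V} (ha : G a ∈ M) (hb : G b ∈ M)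
    (t : ℝ) : G (t • (b - a) + a) ∈ M := by
  by_cases hab : a = b
  · subst hab; simpa using ha
  · have hx : t • (b - a) + a ∈ affineSpan ℝ ({a, b} : Set V) := by
      rw [show t • (b - a) + a = (t • (b -ᵥ a)) +ᵥ a by simp]
      exact vadd_left_mem_affineSpan_pair.2 ⟨t, rfl⟩
    exact affineSpan_pair_le_of_mem_of_mem ha hb (bca_colG G hinj hcol hab hx)

include hinj hcol in
theorem bca_span (s : Set V) {x : V} (hx : x ∈ affineSpan ℝ s) :
    G x ∈ affineSpan ℝ (G '' s) := by
  set M := affineSpan ℝ (G '' s) with hM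
  let T : AffineSubspace ℝ V :=
    { carrier := {y | G y ∈ M}
      smul_vsub_vadd_mem' := by
        intro c p1 p2 p3 h1 h2 h3
        simp only [Set.mem_setOf_eq] at h1 h2 h3 ⊢
        rw [vsub_eq_sub, vadd_eq_add]
        by_cases hc : c = 1
        · -- x = p1 - p2 + p3 = 2 • (z - p2) + p2  with z = (1/2)•(p3-p1)+p1
          have hz := bca_L0 G hinj hcol h1 h3 (1/2 : ℝ)
          have := bca_L0 G hinj hcol h2 hz (2 : ℝ)
          have heq : (2:ℝ) • ((1/2 : ℝ) • (p3 - p1) + p1 - p2) + p2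
              = c • (p1 - p2) + p3 := by
            subst hc; match_scalars <;> ring
          rwa [heq] at this
        · -- y = (1/(1-c))•(p3-p2)+p2 on line p2 p3, then x = (1-c)•(y-p1)+p1
          have hy := bca_L0 G hinj hcol h2 h3 (1/(1-c) : ℝ)
          have := bca_L0 G hinj hcol h1 hy (1 - c : ℝ)
          have heq : (1-c) • ((1/(1-c) : ℝ) • (p3 - p2) + p2 - p1) + p1
              = c • (p1 - p2) + p3 := by
            have h1c : (1:ℝ) - c ≠ 0 := sub_ne_zero.2 (Ne.symm hc)
            match_scalars <;> field_simp <;> ring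
          rwa [heq] at this }
  have hsT : s ⊆ (T : Set V) := fun y hy =>
    subset_affineSpan ℝ _ (Set.mem_image_of_mem G hy)
  have : affineSpan ℝ s ≤ T := affineSpan_le.2 hsT
  exact this hx
end

section
variable {V : Type*} [AddCommGroup V] [Module ℝ V] [FiniteDimensional ℝ V]
  (G : V → V) (hbij : Function.Bijective G) (hG0 : G 0 = 0)
  (hcol : ∀ p q r : V, Collinear ℝ ({p, q, r} : Set V) →
      Collinear ℝ ({G p, G q, G r} : Set V))
  (hdim : 2 ≤ finrank ℝ V)

include hbij hcol in
theorem bca_inv (hdim : 2 ≤ finrank ℝ V) :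
    ∀ a b c : V, Collinear ℝ ({G a, G b, G c} : Set V) → Collinear ℝ ({a, b, c} : Set V) := by
  obtain ⟨hinj, hsurj⟩ := hbij
  intro a b c hGc
  by_contra hn
  have hab : a ≠ b := by
    rintro rfl
    exact hn ((collinear_pair ℝ a c).subset (by intro x hx; simp at hx ⊢; tauto))
  set u : V := b - a with hu
  set v : V := c - a with hv
  have hu0 : u ≠ 0 := sub_ne_zero.2 (Ne.symm hab)
  have hvnot : v ∉ Submodule.span ℝ ({u} : Set V) := by
    intro hmem
    rw [Submodule.mem_span_singleton] at hmem
    obtain ⟨r, hr⟩ := hmem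
    apply hn
    have hc : c ∈ affineSpan ℝ ({a, b} : Set V) := by
      have : c = (r • (b -ᵥ a)) +ᵥ a := by
        simp only [vsub_eq_sub, vadd_eq_add, ← hu, hr, hv]; abel
      rw [this]
      exact vadd_left_mem_affineSpan_pair.2 ⟨r, rfl⟩
    exact (collinear_insert_of_mem_affineSpan_pair hc).subset
      (by intro x hx; simp at hx ⊢; tauto)
  have hvu : v ∉ ({u} : Set V) := by
    simp only [Set.mem_singleton_iff]
    intro h
    exact hvnot (by rw [h]; exact Submodule.mem_span_singleton_self _)
  have hli : LinearIndepOn ℝ id (insert v {u} : Set V) :=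
    (linearIndepOn_id_insert hvu).2 ⟨(linearIndepOn_singleton_iff ℝ).2 hu0, hvnot⟩
  set s0 : Set V := insert v {u} with hs0
  have hsub : s0 ⊆ Set.univ := Set.subset_univ _
  set B : Set V := hli.extend hsub with hB
  have hBss : s0 ⊆ B := hli.subset_extend hsub
  have hBsp : Submodule.span ℝ B = ⊤ := by
    rw [hli.span_extend_eq_span hsub, Submodule.span_univ]
  have hBli : LinearIndependent ℝ ((↑) : B → V) := hli.linearIndepOn_extend hsub
  have hBfin : B.Finite := hBli.setFinite
  -- spanning set s'
  set s' : Set V := {a, b, c} ∪ (fun w => w + a) '' (B \ s0) with hs'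
  have ha' : a ∈ s' := by simp [hs']
  have hb' : b ∈ s' := by simp [hs']
  have hc' : c ∈ s' := by simp [hs']
  have hVS' : vectorSpan ℝ s' = ⊤ := by
    rw [eq_top_iff, ← hBsp]
    apply Submodule.span_le.2
    intro w hw
    by_cases hws : w ∈ s0
    · rcases hws with h | h
      · have := vsub_mem_vectorSpan ℝ hc' ha'
        rw [vsub_eq_sub] at this; rw [h]; exact this
      · simp only [Set.mem_singleton_iff] at h
        have := vsub_mem_vectorSpan ℝ hb' ha'
        rw [vsub_eq_sub] at this; rw [h]; exact this
    · have hmem : w + a ∈ s' := by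
        apply Set.mem_union_right
        exact ⟨w, ⟨hw, hws⟩, rfl⟩
      have := vsub_mem_vectorSpan ℝ hmem ha'
      rw [vsub_eq_sub, add_sub_cancel_right] at this
      exact this
  have hspan' : affineSpan ℝ s' = ⊤ := by
    rw [eq_top_iff]
    intro x _
    have : x = (x - a) +ᵥ a := by simp
    rw [this]
    refine AffineSubspace.vadd_mem_of_mem_direction ?_ (subset_affineSpan ℝ _ ha')
    rw [direction_affineSpan, hVS']
    trivial
  have hGtop : affineSpan ℝ (G '' s') = ⊤ := by
    rw [eq_top_iff]
    intro y _
    obtain ⟨x, rfl⟩ := hsurj y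
    exact bca_span G hinj hcol s' (by rw [hspan']; trivial)
  have hVS : vectorSpan ℝ (G '' s') = ⊤ := by
    rw [← direction_affineSpan, hGtop, AffineSubspace.direction_top]
  set E : Set V := insert (G b - G a) ((fun w => G (w + a) - G a) '' (B \ s0)) with hE
  have hVle : vectorSpan ℝ (G '' s') ≤ Submodule.span ℝ E := by
    rw [vectorSpan_eq_span_vsub_set_right ℝ (Set.mem_image_of_mem G ha')]
    apply Submodule.span_le.2
    rintro _ ⟨_, ⟨x, hx, rfl⟩, rfl⟩
    simp only [vsub_eq_sub]
    rcases hx with hx | hx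
    · rcases hx with h | h | h
      · subst h; simp
      · subst h; exact Submodule.subset_span (Set.mem_insert _ _)
      · -- x = c : use collinearity of images
        simp only [Set.mem_singleton_iff] at h; rw [h]
        rw [collinear_iff_of_mem (show G a ∈ ({G a, G b, G c} : Set V) by simp)] at hGc
        obtain ⟨w, hw⟩ := hGc
        obtain ⟨rb, hrb⟩ := hw (G b) (by simp)
        obtain ⟨rc, hrc⟩ := hw (G c) (by simp)
        have hrb0 : rb ≠ 0 := by
          rintro rfl
          exact hab (hinj (by simpa using hrb.symm))
        have h1 : G b - G a = rb • w := by rw [hrb]; simp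
        have h2 : G c - G a = rc • w := by rw [hrc]; simp
        have : G c - G a = (rc / rb) • (G b - G a) := by
          rw [h1, h2, smul_smul, div_mul_cancel₀ _ hrb0]
        rw [this]
        exact Submodule.smul_mem _ _ (Submodule.subset_span (Set.mem_insert _ _))
    · obtain ⟨w, hw, rfl⟩ := hx
      exact Submodule.subset_span (Set.mem_insert_of_mem _ ⟨w, hw, rfl⟩)
  have hEfin : E.Finite := (((hBfin.diff (t := s0)).image _).insert _)
  haveI : Fintype ↥E := hEfin.fintype
  have hrk : finrank ℝ V ≤ E.toFinset.card := by
    have hEtop : Submodule.span ℝ E = ⊤ := eq_top_iff.2 (by rw [← hVS]; exact hVle)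
    have := finrank_span_le_card (R := ℝ) E
    rwa [hEtop, finrank_top] at this
  -- cardinality bound
  haveI : Fintype ↥B := hBfin.fintype
  have hBcard : B.ncard ≤ finrank ℝ V := by
    rw [Set.ncard_eq_toFinset_card', Set.toFinset_card]
    exact hBli.fintype_card_le_finrank
  have hd1 : (B \ s0).ncard = B.ncard - 2 := by
    rw [Set.ncard_diff hBss (hBfin.subset hBss)]
    congr 1
    exact Set.ncard_pair (fun h => hvu h)
  have hEcard : E.ncard ≤ (B \ s0).ncard + 1 :=
    le_trans (Set.ncard_insert_le _ _) (by
      have := Set.ncard_image_le (s := B \ s0) (f := fun w => G (w + a) - G a)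
        (hBfin.diff (t := s0))
      omega)
  have hEn : E.ncard = E.toFinset.card := Set.ncard_eq_toFinset_card' E
  omega

include hbij hcol hdim in
theorem bca_onto {a b : V} (hab : a ≠ b) {y : V}
    (hy : y ∈ affineSpan ℝ ({G a, G b} : Set V)) :
    ∃ x ∈ affineSpan ℝ ({a, b} : Set V), G x = y := by
  obtain ⟨x, rfl⟩ := hbij.2 y
  refine ⟨x, ?_, rfl⟩
  have h1 : Collinear ℝ ({G x, G a, G b} : Set V) :=
    collinear_insert_of_mem_affineSpan_pair hy
  have h2 : Collinear ℝ ({G a, G b, G x} : Set V) :=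
    h1.subset (by intro y hy'; simp at hy' ⊢; tauto)
  have h3 := bca_inv G hbij hcol hdim a b x h2
  exact h3.mem_affineSpan_of_mem_of_ne (by simp) (by simp) (by simp) hab

theorem bca_indep_notcol {p q : V}
    (h : ∀ s t : ℝ, s • p + t • q = 0 → s = 0 ∧ t = 0) :
    ¬ Collinear ℝ ({0, p, q} : Set V) := by
  intro hc
  rw [collinear_iff_of_mem (show (0:V) ∈ ({0,p,q} : Set V) by simp)] at hc
  obtain ⟨w, hw⟩ := hc
  obtain ⟨rp, hrp⟩ := hw p (by simp)
  obtain ⟨rq, hrq⟩ := hw q (by simp)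
  simp only [vadd_eq_add, add_zero] at hrp hrq
  have h0 : rq • p + (-rp) • q = 0 := by rw [hrp, hrq]; match_scalars <;> ring
  obtain ⟨h1, h2⟩ := h _ _ h0
  have hp0 : p = 0 := by rw [hrp, neg_eq_zero.1 h2, zero_smul]
  exact one_ne_zero (h 1 0 (by simp [hp0])).1

theorem bca_notcol_indep {p q : V} (h : ¬ Collinear ℝ ({0, p, q} : Set V)) :
    ∀ s t : ℝ, s • p + t • q = 0 → s = 0 ∧ t = 0 := by
  intro s t hst
  by_contra hne
  apply h
  rw [collinear_iff_of_mem (show (0:V) ∈ ({0,p,q} : Set V) by simp)]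
  by_cases hs : s = 0
  · have ht : t ≠ 0 := fun h' => hne ⟨hs, h'⟩
    have hq : q = 0 := by
      have : t • q = 0 := by rw [hs, zero_smul, zero_add] at hst; exact hst
      exact (smul_eq_zero.1 this).resolve_left ht
    exact ⟨p, fun x hx => by
      rcases hx with h | h | h
      · exact ⟨0, by simp [h]⟩
      · exact ⟨1, by simp [h]⟩
      · exact ⟨0, by simp at h; simp [h, hq]⟩⟩
  · have hp : p = (-(t/s)) • q := by
      apply smul_right_injective V hs
      show s • p = s • (-(t/s) • q)
      rw [smul_smul]
      have : s • p = -(t • q) := eq_neg_of_add_eq_zero_left hst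
      rw [this]; match_scalars; field_simp
    exact ⟨q, fun x hx => by
      rcases hx with h | h | h
      · exact ⟨0, by simp [h]⟩
      · exact ⟨-(t/s), by simp [h, hp]⟩
      · exact ⟨1, by simp at h; simp [h]⟩⟩

include hbij hG0 hcol hdim in
theorem bca_Gindep {u v : V}
    (hind : ∀ s t : ℝ, s • u + t • v = 0 → s = 0 ∧ t = 0) :
    ∀ s t : ℝ, s • G u + t • G v = 0 → s = 0 ∧ t = 0 := by
  apply bca_notcol_indep
  intro hc
  apply bca_indep_notcol hind
  apply bca_inv G hbij hcol hdim 0 u v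
  rwa [hG0]

include hbij hG0 hcol hdim in
theorem bca_par {u v : V}
    (hind : ∀ s t : ℝ, s • u + t • v = 0 → s = 0 ∧ t = 0) (t : ℝ) :
    ∃ α : ℝ, G (t • u + v) = α • G u + G v := by
  obtain ⟨hinj, hsurj⟩ := hbij
  by_cases ht : t = 0
  · exact ⟨0, by simp [ht]⟩
  have hu0 : u ≠ 0 := fun h => one_ne_zero (hind 1 0 (by simp [h])).1
  have hv0 : v ≠ 0 := fun h => one_ne_zero (hind 0 1 (by simp [h])).2
  have hGuv := bca_Gindep G ⟨hinj, hsurj⟩ hG0 hcol hdim hind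
  -- G (t•u+v) lies in span {G u, G v}
  have hxmem : t • u + v ∈ affineSpan ℝ ({0, u, v} : Set V) := by
    have h0 : (0:V) ∈ affineSpan ℝ ({0,u,v} : Set V) := subset_affineSpan ℝ _ (by simp)
    have hrw : t • u + v = (t • u + v) +ᵥ (0:V) := by simp
    rw [hrw]
    refine AffineSubspace.vadd_mem_of_mem_direction ?_ h0
    rw [direction_affineSpan]
    have hu' : u ∈ vectorSpan ℝ ({0,u,v} : Set V) := by
      have := vsub_mem_vectorSpan ℝ (show u ∈ ({0,u,v} : Set V) by simp)
        (show (0:V) ∈ ({0,u,v} : Set V) by simp)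
      simpa using this
    have hv' : v ∈ vectorSpan ℝ ({0,u,v} : Set V) := by
      have := vsub_mem_vectorSpan ℝ (show v ∈ ({0,u,v} : Set V) by simp)
        (show (0:V) ∈ ({0,u,v} : Set V) by simp)
      simpa using this
    exact Submodule.add_mem _ (Submodule.smul_mem _ _ hu') hv'
  have hGmem : G (t • u + v) ∈ affineSpan ℝ ({0, G u, G v} : Set V) := by
    have := bca_span G hinj hcol ({0,u,v} : Set V) hxmem
    rwa [Set.image_insert_eq, Set.image_insert_eq, Set.image_singleton, hG0] at this
  have hspan : G (t • u + v) ∈ Submodule.span ℝ ({G u, G v} : Set V) := by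
    have h0' : (0:V) ∈ affineSpan ℝ ({0, G u, G v} : Set V) := subset_affineSpan ℝ _ (by simp)
    have hd := AffineSubspace.vsub_mem_direction hGmem h0'
    rw [direction_affineSpan] at hd
    rw [vectorSpan_eq_span_vsub_set_right ℝ (show (0:V) ∈ ({0, G u, G v} : Set V) by simp)] at hd
    simp only [vsub_eq_sub, sub_zero] at hd
    rwa [Set.image_id', Submodule.span_insert_zero] at hd
  obtain ⟨α, β, hx⟩ := Submodule.mem_span_pair.1 hspan
  by_cases hβ : β = 1
  · exact ⟨α, by rw [← hx, hβ, one_smul]⟩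
  exfalso
  have h1β : (1:ℝ) - β ≠ 0 := sub_ne_zero.2 (Ne.symm hβ)
  set y : V := ((1/(1-β)) * α) • G u with hy
  have ymem1 : y ∈ affineSpan ℝ ({G v, G (t • u + v)} : Set V) := by
    have : y = ((1/(1-β)) • (G (t • u + v) -ᵥ G v)) +ᵥ G v := by
      rw [vsub_eq_sub, vadd_eq_add, ← hx, hy]
      match_scalars <;> field_simp <;> ring
    rw [this]
    exact vadd_left_mem_affineSpan_pair.2 ⟨_, rfl⟩
  have ymem2 : y ∈ affineSpan ℝ ({G 0, G u} : Set V) := by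
    rw [hG0]
    have : y = (((1/(1-β)) * α) • (G u -ᵥ (0:V))) +ᵥ (0:V) := by
      simp [hy]
    rw [this]
    exact vadd_left_mem_affineSpan_pair.2 ⟨_, rfl⟩
  have hvx : v ≠ t • u + v := by
    intro h
    have h2 : t • u + v = 0 + v := by rw [zero_add, ← h]
    have h3 : t • u = 0 := add_right_cancel h2
    rcases smul_eq_zero.1 h3 with h | h
    exacts [ht h, hu0 h]
  have h0u : (0:V) ≠ u := Ne.symm hu0
  obtain ⟨z, hz, hGz⟩ := bca_onto G ⟨hinj, hsurj⟩ hcol hdim hvx ymem1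
  obtain ⟨z', hz', hGz'⟩ := bca_onto G ⟨hinj, hsurj⟩ hcol hdim h0u ymem2
  have hzz : z = z' := hinj (by rw [hGz, hGz'])
  -- decompose z and z'
  have hd1 := AffineSubspace.vsub_mem_direction hz
    (left_mem_affineSpan_pair ℝ v (t • u + v))
  rw [direction_affineSpan] at hd1
  obtain ⟨r, hr⟩ := mem_vectorSpan_pair_rev.1 hd1
  have hd2 := AffineSubspace.vsub_mem_direction hz'
    (left_mem_affineSpan_pair ℝ (0:V) u)
  rw [direction_affineSpan] at hd2
  obtain ⟨r', hr'⟩ := mem_vectorSpan_pair_rev.1 hd2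
  simp only [vsub_eq_sub, sub_zero, add_sub_cancel_right] at hr hr'
  -- hr : r • (t • u) = z - v ; hr' : r' • u = z'
  have h1 : z = r • t • u + v := by
    have := hr.symm
    rw [sub_eq_iff_eq_add] at this
    exact this
  have h3 : r • t • u + v = r' • u := by rw [← h1, hzz, hr']
  have hveq : (r * t - r') • u + (1:ℝ) • v = 0 := by
    have h4 : (r * t - r') • u + (1:ℝ) • v = (r • t • u + v) - r' • u := by
      match_scalars <;> ring
    rw [h4, h3, sub_self]
  exact one_ne_zero (hind _ _ hveq).2

theorem bca_exists_indep (hdim' : 2 ≤ finrank ℝ V) (u : V) (hu : u ≠ 0) :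
    ∃ w : V, ∀ s t : ℝ, s • u + t • w = 0 → s = 0 ∧ t = 0 := by
  have hne : Submodule.span ℝ ({u} : Set V) ≠ ⊤ := by
    intro h
    have h1 : finrank ℝ (Submodule.span ℝ ({u} : Set V)) = 1 := finrank_span_singleton hu
    rw [h, finrank_top] at h1
    omega
  obtain ⟨w, hw⟩ : ∃ w, w ∉ Submodule.span ℝ ({u} : Set V) := by
    by_contra h
    push_neg at h
    exact hne (eq_top_iff.2 fun x _ => h x)
  refine ⟨w, fun s t hst => ?_⟩
  by_cases ht : t = 0
  · refine ⟨?_, ht⟩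
    rw [ht, zero_smul, add_zero] at hst
    exact (smul_eq_zero.1 hst).resolve_right hu
  · exfalso
    apply hw
    have : w = (-(s/t)) • u := by
      apply smul_right_injective V ht
      show t • w = t • (-(s/t) • u)
      have h1 : t • w = -(s • u) := eq_neg_of_add_eq_zero_right hst
      rw [h1, smul_smul]
      match_scalars; field_simp
    rw [this]
    exact Submodule.smul_mem _ _ (Submodule.mem_span_singleton_self u)

include hbij hG0 hcol hdim in
theorem bca_add_indep {u v : V}
    (hind : ∀ s t : ℝ, s • u + t • v = 0 → s = 0 ∧ t = 0) :
    G (u + v) = G u + G v := by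
  obtain ⟨α, hα⟩ := bca_par G hbij hG0 hcol hdim hind 1
  rw [one_smul] at hα
  have hind' : ∀ s t : ℝ, s • v + t • u = 0 → s = 0 ∧ t = 0 := by
    intro s t h
    have := hind t s (by rw [add_comm]; exact h)
    exact ⟨this.2, this.1⟩
  obtain ⟨β, hβ⟩ := bca_par G hbij hG0 hcol hdim hind' 1
  rw [one_smul, add_comm v u] at hβ
  have heq : (α - 1) • G u + (1 - β) • G v = 0 := by
    have : α • G u + G v = β • G v + G u := by rw [← hα, ← hβ]
    have h2 : (α - 1) • G u + (1 - β) • G v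
        = (α • G u + G v) - (β • G v + G u) := by match_scalars <;> ring
    rw [h2, this, sub_self]
  have := bca_Gindep G hbij hG0 hcol hdim hind _ _ heq
  rw [hα, sub_eq_zero.1 this.1, one_smul]

include hbij hG0 hcol hdim in
theorem bca_neg (u : V) : G (-u) = - G u := by
  by_cases hu : u = 0
  · rw [hu, neg_zero, hG0, neg_zero]
  obtain ⟨w, hw⟩ := bca_exists_indep hdim u hu
  have hind1 : ∀ s t : ℝ, s • u + t • (-u + w) = 0 → s = 0 ∧ t = 0 := by
    intro s t h
    have h2 : (s - t) • u + t • w = 0 := by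
      have : (s - t) • u + t • w = s • u + t • (-u + w) := by match_scalars <;> ring
      rw [this, h]
    obtain ⟨h3, h4⟩ := hw _ _ h2
    exact ⟨by linarith, h4⟩
  have hind2 : ∀ s t : ℝ, s • (-u) + t • w = 0 → s = 0 ∧ t = 0 := by
    intro s t h
    have h2 : (-s) • u + t • w = 0 := by
      have : (-s) • u + t • w = s • (-u) + t • w := by match_scalars <;> ring
      rw [this, h]
    obtain ⟨h3, h4⟩ := hw _ _ h2
    exact ⟨by linarith, h4⟩
  have e1 : G (u + (-u + w)) = G u + G (-u + w) :=
    bca_add_indep G hbij hG0 hcol hdim hind1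
  have e2 : G (-u + w) = G (-u) + G w :=
    bca_add_indep G hbij hG0 hcol hdim hind2
  have e3 : u + (-u + w) = w := by abel
  rw [e3, e2] at e1
  have h5 : (G u + G (-u)) + G w = 0 + G w := by
    rw [add_assoc, ← e1, zero_add]
  exact eq_neg_of_add_eq_zero_right (add_right_cancel h5)
  
include hbij hG0 hcol hdim in
theorem bca_add (u v : V) : G (u + v) = G u + G v := by
  by_cases hu : u = 0
  · rw [hu, hG0, zero_add, zero_add]
  by_cases hv : v = 0
  · rw [hv, hG0, add_zero, add_zero]
  by_cases hiv : ∀ s t : ℝ, s • u + t • v = 0 → s = 0 ∧ t = 0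
  · exact bca_add_indep G hbij hG0 hcol hdim hiv
  -- dependent case : v = c • u with c ≠ 0
  push_neg at hiv
  obtain ⟨s, t, hst, hne⟩ := hiv
  have ht : t ≠ 0 := by
    rintro rfl
    rw [zero_smul, add_zero] at hst
    rcases smul_eq_zero.1 hst with h | h
    · exact hne h (by rfl)
    · exact absurd h hu
  have hs : s ≠ 0 := by
    rintro rfl
    rw [zero_smul, zero_add] at hst
    rcases smul_eq_zero.1 hst with h | h
    · exact absurd h ht
    · exact absurd h hv
  set c : ℝ := -(s/t) with hc
  have hc0 : c ≠ 0 := by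
    rw [hc]; exact neg_ne_zero.2 (div_ne_zero hs ht)
  have hveq : v = c • u := by
    apply smul_right_injective V ht
    show t • v = t • (c • u)
    have h1 : t • v = -(s • u) := eq_neg_of_add_eq_zero_right hst
    rw [h1, smul_smul, hc]
    match_scalars; field_simp
  by_cases huv : u + v = 0
  · have hveq2 : v = -u := eq_neg_of_add_eq_zero_right huv
    rw [huv, hG0, hveq2, bca_neg G hbij hG0 hcol hdim u, add_neg_cancel]
  -- u + v ≠ 0 : c ≠ -1
  have huv2 : u + v = (1 + c) • u := by rw [hveq]; match_scalars; ring
  have h1c : (1:ℝ) + c ≠ 0 := by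
    intro h
    rw [huv2, h, zero_smul] at huv
    exact huv rfl
  obtain ⟨w, hw⟩ := bca_exists_indep hdim u hu
  have hind1 : ∀ s' t' : ℝ, s' • (u + v) + t' • w = 0 → s' = 0 ∧ t' = 0 := by
    intro s' t' h
    have h2 : (s' * (1 + c)) • u + t' • w = 0 := by
      have : (s' * (1 + c)) • u + t' • w = s' • ((1 + c) • u) + t' • w := by
        match_scalars <;> ring
      rw [this, ← huv2, h]
    obtain ⟨h3, h4⟩ := hw _ _ h2
    exact ⟨by rcases mul_eq_zero.1 h3 with h | h; exact h; exact absurd h h1c, h4⟩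
  have hind2 : ∀ s' t' : ℝ, s' • u + t' • (v + w) = 0 → s' = 0 ∧ t' = 0 := by
    intro s' t' h
    have h2 : (s' + t' * c) • u + t' • w = 0 := by
      have : (s' + t' * c) • u + t' • w = s' • u + t' • (c • u + w) := by
        match_scalars <;> ring
      rw [this, ← hveq, h]
    obtain ⟨h3, h4⟩ := hw _ _ h2
    constructor
    · rw [h4] at h3; simpa using h3
    · exact h4
  have hind3 : ∀ s' t' : ℝ, s' • v + t' • w = 0 → s' = 0 ∧ t' = 0 := by
    intro s' t' h
    have h2 : (s' * c) • u + t' • w = 0 := by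
      have : (s' * c) • u + t' • w = s' • (c • u) + t' • w := by
        match_scalars <;> ring
      rw [this, ← hveq, h]
    obtain ⟨h3, h4⟩ := hw _ _ h2
    exact ⟨by rcases mul_eq_zero.1 h3 with h | h; exact h; exact absurd h hc0, h4⟩
  have e1 : G ((u + v) + w) = G (u + v) + G w :=
    bca_add_indep G hbij hG0 hcol hdim hind1
  have e2 : G (u + (v + w)) = G u + G (v + w) :=
    bca_add_indep G hbij hG0 hcol hdim hind2
  have e3 : G (v + w) = G v + G w :=
    bca_add_indep G hbij hG0 hcol hdim hind3
  have e4 : (u + v) + w = u + (v + w) := by abel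
  rw [e4, e2, e3] at e1
  have h5 : G (u + v) + G w = (G u + G v) + G w := by rw [← e1]; abel
  exact add_right_cancel h5


include hbij hG0 hcol hdim in
theorem bca_hom : ∀ (t : ℝ) (u : V), G (t • u) = t • G u := by
  have hinj := hbij.1
  have hGne : ∀ u : V, u ≠ 0 → G u ≠ 0 := fun u hu h =>
    hu (hinj (h.trans hG0.symm))
  have hline : ∀ (u : V), u ≠ 0 → ∀ t : ℝ, ∃ c : ℝ, G (t • u) = c • G u := by
    intro u hu t
    have hc : Collinear ℝ ({(0:V), u, t • u} : Set V) := by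
      rw [collinear_iff_of_mem (show (0:V) ∈ ({0, u, t • u} : Set V) by simp)]
      refine ⟨u, fun p hp => ?_⟩
      rcases hp with h | h | h
      · exact ⟨0, by simp [h]⟩
      · exact ⟨1, by simp [h]⟩
      · exact ⟨t, by simp at h; simp [h]⟩
    have hc2 := hcol 0 u (t • u) hc
    have hne : G 0 ≠ G u := by rw [hG0]; exact (hGne u hu).symm
    have hmem := hc2.mem_affineSpan_of_mem_of_ne (p₁ := G 0) (p₂ := G u) (p₃ := G (t • u)) (by simp) (by simp) (by simp) hne
    rw [hG0] at hmem
    have hd := AffineSubspace.vsub_mem_direction hmem (left_mem_affineSpan_pair ℝ (0:V) (G u))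
    rw [direction_affineSpan] at hd
    obtain ⟨r, hr⟩ := mem_vectorSpan_pair_rev.1 hd
    simp only [vsub_eq_sub, sub_zero] at hr
    exact ⟨r, hr.symm⟩
  choose sig hsig using hline
  have hsig_eq : ∀ (u : V) (hu : u ≠ 0) (t c : ℝ), G (t • u) = c • G u →
      sig u hu t = c := by
    intro u hu t c h
    exact smul_left_injective ℝ (hGne u hu) ((hsig u hu t).symm.trans h)
  have hone : ∀ (u : V) (hu : u ≠ 0), sig u hu 1 = 1 :=
    fun u hu => hsig_eq u hu 1 1 (by rw [one_smul, one_smul])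
  have hsame : ∀ (u v : V) (hu : u ≠ 0) (hv : v ≠ 0)
      (hind : ∀ s t : ℝ, s • u + t • v = 0 → s = 0 ∧ t = 0) (t : ℝ),
      sig u hu t = sig v hv t := by
    intro u v hu hv hind t
    have huv : u + v ≠ 0 := by
      intro h
      exact one_ne_zero (hind 1 1 (by rw [one_smul, one_smul, h])).1
    have e1 : G (t • (u + v)) = sig u hu t • G u + sig v hv t • G v := by
      rw [smul_add, bca_add G hbij hG0 hcol hdim _ _, ← hsig u hu t, ← hsig v hv t]
    have e2 : G (t • (u + v)) = sig (u+v) huv t • G u + sig (u+v) huv t • G v := by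
      rw [hsig (u+v) huv t, bca_add_indep G hbij hG0 hcol hdim hind, smul_add]
    have e3 : (sig u hu t - sig (u+v) huv t) • G u
        + (sig v hv t - sig (u+v) huv t) • G v = 0 := by
      have h4 : (sig u hu t - sig (u+v) huv t) • G u
          + (sig v hv t - sig (u+v) huv t) • G v
          = (sig u hu t • G u + sig v hv t • G v)
            - (sig (u+v) huv t • G u + sig (u+v) huv t • G v) := by
        match_scalars <;> ring
      rw [h4, ← e1, ← e2, sub_self]
    obtain ⟨h5, h6⟩ := bca_Gindep G hbij hG0 hcol hdim hind _ _ e3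
    have h7 := sub_eq_zero.1 h5
    have h8 := sub_eq_zero.1 h6
    rw [h7, h8]
  have hsame_all : ∀ (u v : V) (hu : u ≠ 0) (hv : v ≠ 0) (t : ℝ),
      sig u hu t = sig v hv t := by
    intro u v hu hv t
    by_cases hind : ∀ s t : ℝ, s • u + t • v = 0 → s = 0 ∧ t = 0
    · exact hsame u v hu hv hind t
    · -- v = c • u
      push_neg at hind
      obtain ⟨s', t', hst, hne⟩ := hind
      have ht' : t' ≠ 0 := by
        rintro rfl
        rw [zero_smul, add_zero] at hst
        rcases smul_eq_zero.1 hst with h | h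
        · exact hne h rfl
        · exact absurd h hu
      have hs' : s' ≠ 0 := by
        rintro rfl
        rw [zero_smul, zero_add] at hst
        rcases smul_eq_zero.1 hst with h | h
        · exact absurd h ht'
        · exact absurd h hv
      have hveq : v = (-(s'/t')) • u := by
        apply smul_right_injective V ht'
        show t' • v = t' • ((-(s'/t')) • u)
        have h1 : t' • v = -(s' • u) := eq_neg_of_add_eq_zero_right hst
        rw [h1, smul_smul]
        match_scalars; field_simp
      have hc0 : -(s'/t') ≠ 0 := neg_ne_zero.2 (div_ne_zero hs' ht')
      obtain ⟨w, hw⟩ := bca_exists_indep hdim u hu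
      have hw0 : w ≠ 0 := by
        rintro rfl
        exact one_ne_zero (hw 0 1 (by simp)).2
      have hind3 : ∀ s t : ℝ, s • v + t • w = 0 → s = 0 ∧ t = 0 := by
        intro a b h
        have h2 : (a * (-(s'/t'))) • u + b • w = 0 := by
          have : (a * (-(s'/t'))) • u + b • w = a • ((-(s'/t')) • u) + b • w := by
            match_scalars <;> ring
          rw [this, ← hveq, h]
        obtain ⟨h3, h4⟩ := hw _ _ h2
        exact ⟨by rcases mul_eq_zero.1 h3 with h | h; exact h; exact absurd h hc0, h4⟩
      rw [hsame u w hu hw0 hw t, hsame v w hv hw0 hind3 t]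
  -- global sigma
  haveI : Nontrivial V := by
    apply nontrivial_of_finrank_pos (R := ℝ); omega
  obtain ⟨e, he⟩ := exists_ne (0 : V)
  set σ : ℝ → ℝ := sig e he with hσ
  have hσu : ∀ (u : V) (hu : u ≠ 0) (t : ℝ), G (t • u) = σ t • G u := by
    intro u hu t
    rw [hsig u hu t, hsame_all u e hu he t]
  have hσ0 : σ 0 = 0 := by
    have := hσu e he 0
    rw [zero_smul, hG0] at this
    exact (smul_eq_zero.1 this.symm).resolve_right (hGne e he)
  have hσ1 : σ 1 = 1 := hone e he
  have hσadd : ∀ s t : ℝ, σ (s + t) = σ s + σ t := by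
    intro s t
    apply smul_left_injective ℝ (hGne e he)
    show σ (s+t) • G e = (σ s + σ t) • G e
    rw [← hσu e he (s+t), add_smul, add_smul, ← hσu e he s, ← hσu e he t,
      ← bca_add G hbij hG0 hcol hdim _ _]
  have hσmul : ∀ s t : ℝ, σ (s * t) = σ s * σ t := by
    intro s t
    by_cases ht : t = 0
    · rw [ht, mul_zero, hσ0, mul_zero]
    · have hte : t • e ≠ 0 := smul_ne_zero ht he
      apply smul_left_injective ℝ (hGne e he)
      show σ (s*t) • G e = (σ s * σ t) • G e
      rw [← hσu e he (s*t), mul_smul]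
      have h1 : G (s • t • e) = σ s • G (t • e) := hσu (t • e) hte s
      rw [h1, hσu e he t, smul_smul]
  let φ : ℝ →+* ℝ :=
    { toFun := σ, map_one' := hσ1, map_mul' := hσmul, map_zero' := hσ0,
      map_add' := hσadd }
  have hφ : φ = RingHom.id ℝ := Subsingleton.elim _ _
  have hσid : ∀ t : ℝ, σ t = t := fun t => DFunLike.congr_fun hφ t
  intro t u
  by_cases hu : u = 0
  · rw [hu, smul_zero, hG0, smul_zero]
  · rw [hσu u hu t, hσid]

end

/-- **main theorem of affine geometry.** A bijective collineation of a real
affine space of dimension `≥ 2` (and finite) is an affine map: there is a linear map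
`f : V → V` with `F (v +ᵥ p) = f v +ᵥ F p` for all points `p` and vectors `v`. -/
theorem bijective_collineation_affine
    {V S : Type*} [AddCommGroup V] [Module ℝ V] [AddTorsor V S]
    [FiniteDimensional ℝ V] (hdim : 2 ≤ Module.finrank ℝ V)
    (F : S → S) (hbij : Function.Bijective F)
    (hcol : ∀ p q r : S, Collinear ℝ ({p, q, r} : Set S) →
      Collinear ℝ ({F p, F q, F r} : Set S)) :
    ∃ f : V →ₗ[ℝ] V, ∀ (p : S) (v : V), F (v +ᵥ p) = f v +ᵥ F p := by
  classical
  obtain ⟨o⟩ := (inferInstance : Nonempty S)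
  set G : V → V := fun w => F (w +ᵥ o) -ᵥ F o with hGdef
  have hGbij : Function.Bijective G := by
    have h : G = ((Equiv.vaddConst (F o)).symm : S → V) ∘ F ∘ ((Equiv.vaddConst o) : V → S) := rfl
    rw [h]
    exact ((Equiv.vaddConst (F o)).symm.bijective.comp hbij).comp
      (Equiv.vaddConst o).bijective
  have hG0 : G 0 = 0 := by simp [hGdef]
  have hGcol : ∀ p q r : V, Collinear ℝ ({p, q, r} : Set V) →
      Collinear ℝ ({G p, G q, G r} : Set V) := by
    intro p q r h
    have h1 : Collinear ℝ ({p +ᵥ o, q +ᵥ o, r +ᵥ o} : Set S) := by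
      obtain ⟨p₀, v, hv⟩ := (collinear_iff_exists_forall_eq_smul_vadd (k := ℝ) _).1 h
      refine (collinear_iff_exists_forall_eq_smul_vadd (k := ℝ) _).2 ⟨p₀ +ᵥ o, v, ?_⟩
      intro x hx
      rcases hx with hx | hx | hx
      · obtain ⟨rp, hrp⟩ := hv p (by simp)
        exact ⟨rp, by rw [hx, hrp, vadd_eq_add, add_vadd]⟩
      · obtain ⟨rp, hrp⟩ := hv q (by simp)
        exact ⟨rp, by rw [hx, hrp, vadd_eq_add, add_vadd]⟩
      · simp only [Set.mem_singleton_iff] at hx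
        obtain ⟨rp, hrp⟩ := hv r (by simp)
        exact ⟨rp, by rw [hx, hrp, vadd_eq_add, add_vadd]⟩
    have h2 := hcol _ _ _ h1
    obtain ⟨q₀, w, hw⟩ := (collinear_iff_exists_forall_eq_smul_vadd (k := ℝ) _).1 h2
    refine (collinear_iff_exists_forall_eq_smul_vadd (k := ℝ) _).2 ⟨q₀ -ᵥ F o, w, ?_⟩
    intro x hx
    have key : ∀ y : V, F (y +ᵥ o) ∈ ({F (p +ᵥ o), F (q +ᵥ o), F (r +ᵥ o)} : Set S) →
        ∃ rr : ℝ, G y = rr • w +ᵥ (q₀ -ᵥ F o) := by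
      intro y hy
      obtain ⟨rr, hrr⟩ := hw _ hy
      refine ⟨rr, ?_⟩
      rw [hGdef]
      simp only
      rw [hrr, vadd_vsub_assoc, vadd_eq_add]
    rcases hx with hx | hx | hx
    · rw [hx]; exact key p (by simp)
    · rw [hx]; exact key q (by simp)
    · simp only [Set.mem_singleton_iff] at hx
      rw [hx]; exact key r (by simp)
  have hadd := bca_add G hGbij hG0 hGcol hdim
  have hhom := bca_hom G hGbij hG0 hGcol hdim
  refine ⟨{ toFun := G, map_add' := hadd,
            map_smul' := fun t u => by simpa using hhom t u }, ?_⟩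
  intro p v
  have h1 : v +ᵥ p = (v + (p -ᵥ o)) +ᵥ o := by
    rw [add_vadd, vsub_vadd]
  have h2 : ∀ x : V, F (x +ᵥ o) = G x +ᵥ F o := by
    intro x; rw [hGdef]; simp
  rw [h1, h2, hadd, LinearMap.coe_mk, AddHom.coe_mk, add_vadd, ← h2, vsub_vadd]
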